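/- Let Λ ≥ 2, let χ_Λ be an ultraviolet cutoff function, and fix c > 0. There exist C > 0 and α₀ ∈ (0, 1) such that for all α ∈ (0, α₀), | ∫_{ℝ³} χ_Λ(|k|)² / ( |k| (|k| + |k|²) (|k| + |k|² + c α²) ) dk − 8π log(1/α) | ≤ C. -/

import Mathlib

open MeasureTheory Real Set

/-- `χ : ℝ → ℝ` is an ultraviolet cutoff function at scale `Λ`: it is `C¹`,
takes values in `[0,1]`, equals `1` on `[0, Λ-1]` and vanishes on `[Λ, ∞)`. -/
def IsUVCutoff (Λ : ℝ) (χ : ℝ → ℝ) : Prop :=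
  ContDiff ℝ 1 χ ∧ (∀ t, 0 ≤ χ t) ∧ (∀ t, χ t ≤ 1) ∧
    (∀ t, 0 ≤ t → t ≤ Λ - 1 → χ t = 1) ∧ (∀ t, Λ ≤ t → χ t = 0)

set_option maxHeartbeats 1000000 in
/-- The key integral asymptotic producing the `α⁵ log α⁻¹` term:
`∫_{ℝ³} χ_Λ(|k|)² / (|k| (|k| + |k|²) (|k| + |k|² + c α²)) dk
  = 8π log(1/α) + O(1)` as `α → 0⁺`. -/
theorem cutoff_integral_log_alpha_asymptotics (Λ : ℝ) (hΛ : 2 ≤ Λ) (χ : ℝ → ℝ)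
    (hχ : IsUVCutoff Λ χ) (c : ℝ) (hc : 0 < c) :
    ∃ C > (0 : ℝ), ∃ α₀ ∈ Set.Ioo (0 : ℝ) 1, ∀ α ∈ Set.Ioo (0 : ℝ) α₀,
      |(∫ k : EuclideanSpace ℝ (Fin 3),
          (χ ‖k‖) ^ 2 / (‖k‖ * (‖k‖ + ‖k‖ ^ 2) * (‖k‖ + ‖k‖ ^ 2 + c * α ^ 2)))
        - 8 * Real.pi * Real.log (1 / α)| ≤ C := by
  obtain ⟨hχ1, hχ0, hχle, hχone, hχzero⟩ := hχ
  set C₁ : ℝ := 2 + (Λ - 1) / 4 + Real.log (1 + c) + |Real.log c| with hC₁def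
  have hC₁pos : 0 < C₁ := by
    have h1 : 0 ≤ Real.log (1 + c) := Real.log_nonneg (by linarith)
    have h2 : 0 ≤ |Real.log c| := abs_nonneg _
    have : (0:ℝ) ≤ (Λ - 1) / 4 := by linarith
    positivity
  refine ⟨4 * π * C₁, by positivity, 1/2, by norm_num, fun α hα => ?_⟩
  obtain ⟨hα0, hα2⟩ := hα
  have hα1 : α < 1 := by linarith
  set P : ℝ := c * α ^ 2 with hPdef
  have hP : 0 < P := by positivity
  have hPc : P ≤ c := by
    have h : α ^ 2 ≤ 1 := by nlinarith
    calc P = c * α ^ 2 := hPdef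
      _ ≤ c * 1 := by nlinarith
      _ = c := mul_one c
  -- the radial function with junk at 0 (matching the ℝ³ integrand)
  set f : ℝ → ℝ := fun r => χ r ^ 2 / (r * (r + r ^ 2) * (r + r ^ 2 + P)) with hfdef
  -- the clean radial function
  set g : ℝ → ℝ := fun r => χ r ^ 2 / ((1 + r) * (r ^ 2 + r + P)) with hgdef
  have hball : (volume (Metric.ball (0 : EuclideanSpace ℝ (Fin 3)) 1)).toReal = 4 * π / 3 := by
    rw [EuclideanSpace.volume_ball]
    have hG : Real.Gamma ((Fintype.card (Fin 3) : ℝ) / 2 + 1) = 3 / 4 * Real.sqrt π := by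
      rw [show ((Fintype.card (Fin 3) : ℝ)) = 3 by simp,
        show (3:ℝ)/2 + 1 = (3/2) + 1 by norm_num, Real.Gamma_add_one (by norm_num),
        show (3:ℝ)/2 = 1/2 + 1 by norm_num, Real.Gamma_add_one (by norm_num),
        Real.Gamma_one_half_eq]
      ring
    have hs : Real.sqrt π > 0 := Real.sqrt_pos.mpr Real.pi_pos
    rw [hG, Fintype.card_fin]
    have hval : Real.sqrt π ^ 3 / (3 / 4 * Real.sqrt π) = 4 * π / 3 := by
      have h2 : Real.sqrt π ^ 2 = π := Real.sq_sqrt Real.pi_pos.le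
      field_simp; nlinarith [hs]
    rw [ENNReal.toReal_mul, hval]
    simp
    positivity
  -- Step A: reduce to radial integral
  have hrad : (∫ k : EuclideanSpace ℝ (Fin 3),
        (χ ‖k‖) ^ 2 / (‖k‖ * (‖k‖ + ‖k‖ ^ 2) * (‖k‖ + ‖k‖ ^ 2 + c * α ^ 2)))
      = 4 * π * ∫ y in Ioi (0:ℝ), g y := by
    have := integral_fun_norm_addHaar (volume : Measure (EuclideanSpace ℝ (Fin 3))) f
    simp only [finrank_euclideanSpace_fin] at this
    rw [show (∫ k : EuclideanSpace ℝ (Fin 3),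
        (χ ‖k‖) ^ 2 / (‖k‖ * (‖k‖ + ‖k‖ ^ 2) * (‖k‖ + ‖k‖ ^ 2 + c * α ^ 2)))
        = ∫ k : EuclideanSpace ℝ (Fin 3), f ‖k‖ from rfl, this, measureReal_def, hball]
    have hcong : ∀ y ∈ Ioi (0:ℝ), y ^ (3 - 1) • f y = g y := by
      intro y hy
      have hy0 : 0 < y := hy
      have h1 : (0:ℝ) < 1 + y := by linarith
      have h2 : (0:ℝ) < y ^ 2 + y + P := by positivity
      simp only [hfdef, hgdef, smul_eq_mul]
      rw [show (3 - 1 : ℕ) = 2 from rfl]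
      rw [show y * (y + y ^ 2) * (y + y ^ 2 + P) = y ^ 2 * ((1 + y) * (y ^ 2 + y + P)) by ring]
      rw [div_mul_eq_div_div_swap, mul_comm,
        div_mul_cancel₀ _ (by positivity : (y:ℝ) ^ 2 ≠ 0)]
    rw [setIntegral_congr_fun measurableSet_Ioi hcong]
    rw [nsmul_eq_mul, smul_eq_mul]
    ring
  rw [hrad]
  -- continuity of g on [0, Λ]
  have hgcont : ContinuousOn g (Icc 0 Λ) := by
    apply ContinuousOn.div
    · exact (hχ1.continuous.pow 2).continuousOn
    · fun_prop
    · intro x hx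
      have : (0:ℝ) < (1 + x) * (x ^ 2 + x + P) := by
        have := hx.1; positivity
      exact this.ne'
  have hsub1 : uIcc (0:ℝ) 1 ⊆ Icc 0 Λ := by
    rw [uIcc_of_le (by norm_num : (0:ℝ) ≤ 1)]
    exact Icc_subset_Icc le_rfl (by linarith)
  have hsub2 : uIcc (1:ℝ) Λ ⊆ Icc 0 Λ := by
    rw [uIcc_of_le (by linarith : (1:ℝ) ≤ Λ)]
    exact Icc_subset_Icc (by norm_num) le_rfl
  have hint01 : IntervalIntegrable g volume 0 1 := (hgcont.mono hsub1).intervalIntegrable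
  have hint1Λ : IntervalIntegrable g volume 1 Λ := (hgcont.mono hsub2).intervalIntegrable
  -- Step B: the Ioi integral equals the interval integral over [0, Λ]
  have hsplit0 : (∫ y in Ioi (0:ℝ), g y) = ∫ y in (0:ℝ)..Λ, g y := by
    have hunion : Ioc (0:ℝ) Λ ∪ Ioi Λ = Ioi 0 := Ioc_union_Ioi_eq_Ioi (by linarith)
    have hzero : ∀ y ∈ Ioi Λ, g y = 0 := by
      intro y hy
      have : χ y = 0 := hχzero y (le_of_lt hy)
      simp [hgdef, this]
    have hIntΛ : IntegrableOn g (Ioi Λ) := by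
      apply (integrableOn_congr_fun (fun x hx => (hzero x hx).symm) measurableSet_Ioi).mp
      exact integrableOn_zero
    have hIntIoc : IntegrableOn g (Ioc 0 Λ) :=
      (hgcont.integrableOn_Icc).mono_set Ioc_subset_Icc_self
    rw [← hunion, setIntegral_union (Ioc_disjoint_Ioi le_rfl) measurableSet_Ioi hIntIoc hIntΛ,
      setIntegral_eq_zero_of_forall_eq_zero hzero, add_zero,
      intervalIntegral.integral_of_le (by linarith)]
  rw [hsplit0, ← intervalIntegral.integral_add_adjacent_intervals hint01 hint1Λ]
  -- Step C: the model integral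
  set K : ℝ := ∫ x in (0:ℝ)..1, (x + P)⁻¹ with hKdef
  have hKval : K = Real.log ((1 + P) / P) := by
    rw [hKdef, intervalIntegral.integral_comp_add_right (fun x => x⁻¹) P, zero_add,
      integral_inv (by
        rw [uIcc_of_le (by linarith)]
        intro h
        exact absurd h.1 (by linarith))]
  have hhint : IntervalIntegrable (fun x => (x + P)⁻¹) volume 0 1 := by
    apply ContinuousOn.intervalIntegrable
    apply ContinuousOn.inv₀
    · fun_prop
    · intro x hx
      rw [uIcc_of_le (by norm_num : (0:ℝ) ≤ 1)] at hx
      have := hx.1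
      positivity
  -- |∫_0^1 g - K| ≤ 2
  have hA : |(∫ x in (0:ℝ)..1, g x) - K| ≤ 2 := by
    rw [hKdef, ← intervalIntegral.integral_sub hint01 hhint]
    have := intervalIntegral.norm_integral_le_of_norm_le_const
      (a := 0) (b := 1) (C := 2) (f := fun x => g x - (x + P)⁻¹) ?_
    · simpa using this
    · intro x hx
      rw [uIoc_of_le (by norm_num : (0:ℝ) ≤ 1)] at hx
      obtain ⟨hx0, hx1⟩ := hx
      have hχx : χ x = 1 := hχone x hx0.le (by linarith)
      have h1 : (0:ℝ) < 1 + x := by linarith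
      have h2 : (0:ℝ) < x ^ 2 + x + P := by positivity
      have h3 : (0:ℝ) < x + P := by positivity
      have hgx : g x = ((1 + x) * (x ^ 2 + x + P))⁻¹ := by
        simp [hgdef, hχx]
      show |g x - (x + P)⁻¹| ≤ 2
      rw [hgx, abs_le]
      have hle : (x + P) ≤ (1 + x) * (x ^ 2 + x + P) := by nlinarith
      have hmono := one_div_le_one_div_of_le h3 hle
      rw [one_div, one_div] at hmono
      have key : (x + P)⁻¹ - ((1 + x) * (x ^ 2 + x + P))⁻¹ ≤ 2 := by
        have heq : (x + P)⁻¹ - ((1 + x) * (x ^ 2 + x + P))⁻¹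
            = (x ^ 3 + 2 * x ^ 2 + x * P) / ((x + P) * ((1 + x) * (x ^ 2 + x + P))) := by
          field_simp
          ring
        rw [heq, div_le_iff₀ (by positivity)]
        have haux : x ^ 3 + 2 * x ^ 2 + x * P ≤ 2 * (x * ((1 + x) * (x ^ 2 + x + P))) := by
          nlinarith [mul_nonneg hx0.le hP.le, mul_nonneg (mul_nonneg hx0.le hx0.le) hP.le,
            pow_nonneg hx0.le 3, pow_nonneg hx0.le 4]
        have haux2 : x * ((1 + x) * (x ^ 2 + x + P)) ≤ (x + P) * ((1 + x) * (x ^ 2 + x + P)) :=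
          mul_le_mul_of_nonneg_right (by linarith) (mul_pos h1 h2).le
        linarith
      constructor
      · linarith
      · linarith [inv_pos.mpr h3, inv_pos.mpr (mul_pos h1 h2)]
  -- |∫_1^Λ g| ≤ (Λ-1)/4
  have hB : |∫ x in (1:ℝ)..Λ, g x| ≤ (Λ - 1) / 4 := by
    have := intervalIntegral.norm_integral_le_of_norm_le_const
      (a := 1) (b := Λ) (C := 1/4) (f := g) ?_
    · rw [Real.norm_eq_abs] at this
      calc |∫ x in (1:ℝ)..Λ, g x| ≤ 1/4 * |Λ - 1| := this
        _ = (Λ - 1) / 4 := by rw [abs_of_nonneg (by linarith)]; ring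
    · intro x hx
      rw [uIoc_of_le (by linarith : (1:ℝ) ≤ Λ)] at hx
      obtain ⟨hx1, hxΛ⟩ := hx
      have h1 : (2:ℝ) ≤ 1 + x := by linarith
      have h2 : (2:ℝ) ≤ x ^ 2 + x + P := by nlinarith
      have hden : (4:ℝ) ≤ (1 + x) * (x ^ 2 + x + P) := by nlinarith
      have hnum : χ x ^ 2 ≤ 1 := by
        have := hχ0 x; have := hχle x; nlinarith
      show |χ x ^ 2 / ((1 + x) * (x ^ 2 + x + P))| ≤ 1 / 4
      rw [abs_of_nonneg (by positivity), div_le_iff₀ (by nlinarith)]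
      linarith
  -- K vs 2 log(1/α)
  have hK2 : |K - 2 * Real.log (1 / α)| ≤ Real.log (1 + c) + |Real.log c| := by
    rw [hKval]
    have hlogP : Real.log P = Real.log c + 2 * Real.log α := by
      rw [hPdef, Real.log_mul hc.ne' (by positivity), Real.log_pow]
      push_cast; ring
    rw [Real.log_div (by positivity) hP.ne', one_div, Real.log_inv]
    have h1 : 0 ≤ Real.log (1 + P) := Real.log_nonneg (by linarith)
    have h2 : Real.log (1 + P) ≤ Real.log (1 + c) :=
      Real.log_le_log (by linarith) (by linarith)
    rw [hlogP]
    have : Real.log (1 + P) - (Real.log c + 2 * Real.log α) - 2 * -Real.log α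
        = Real.log (1 + P) - Real.log c := by ring
    rw [this]
    have := abs_sub_abs_le_abs_sub (Real.log (1 + P)) (Real.log c)
    calc |Real.log (1 + P) - Real.log c| ≤ |Real.log (1 + P)| + |Real.log c| := abs_sub _ _
      _ ≤ Real.log (1 + c) + |Real.log c| := by
          rw [abs_of_nonneg h1]; linarith
  -- assemble
  have hfinal : |((∫ x in (0:ℝ)..1, g x) + ∫ x in (1:ℝ)..Λ, g x) - 2 * Real.log (1 / α)| ≤ C₁ := by
    have : ((∫ x in (0:ℝ)..1, g x) + ∫ x in (1:ℝ)..Λ, g x) - 2 * Real.log (1 / α)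
        = ((∫ x in (0:ℝ)..1, g x) - K) + (∫ x in (1:ℝ)..Λ, g x) + (K - 2 * Real.log (1 / α)) := by
      ring
    rw [this, hC₁def]
    calc |_| ≤ |((∫ x in (0:ℝ)..1, g x) - K) + (∫ x in (1:ℝ)..Λ, g x)| + |K - 2 * Real.log (1/α)| :=
          abs_add_le _ _
      _ ≤ (|((∫ x in (0:ℝ)..1, g x) - K)| + |∫ x in (1:ℝ)..Λ, g x|) + |K - 2 * Real.log (1/α)| := by
          gcongr; exact abs_add_le _ _
      _ ≤ (2 + (Λ - 1) / 4) + (Real.log (1 + c) + |Real.log c|) := by gcongr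
      _ = 2 + (Λ - 1) / 4 + Real.log (1 + c) + |Real.log c| := by ring
  have : 4 * π * ((∫ x in (0:ℝ)..1, g x) + ∫ x in (1:ℝ)..Λ, g x) - 8 * π * Real.log (1 / α)
      = 4 * π * (((∫ x in (0:ℝ)..1, g x) + ∫ x in (1:ℝ)..Λ, g x) - 2 * Real.log (1 / α)) := by
    ring
  rw [this, abs_mul, abs_of_nonneg (by positivity : (0:ℝ) ≤ 4 * π)]
  exact mul_le_mul_of_nonneg_left hfinal (by positivity)
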